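/- Let M be a monoid, A a countable type, and suppose lgcd : (List A → Option M) → M and red : (List A → Option M) → (List A → Option M) satisfy conditions (a) and (b) with index set List A. Let (S, init, t, step) be an M-transducer over A, let L w = t†(init ⊙† w) be the language it recognizes, and for s : S let L_s : List A → Option M be defined by L_s w = t†(some (1, s) ⊙† w). Let Irr be the image of red on nontrivial functions, and define the final transducer F = (Irr, init_F, t_F, step_F) by: init_F = some (lgcd L, red L) if L is nontrivial and none otherwise; t_F Λ = Λ []; step_F a Λ = some (lgcd (a⁻¹Λ), red (a⁻¹Λ)) if a⁻¹Λ is nontrivial and none otherwise, where (a⁻¹Λ) w = Λ (a :: w). Then the function f : S → Option (M × Irr) defined by f s = some (lgcd L_s, red L_s) if L_s is nontrivial and f s = none otherwise is a transducer morphism from (S, init, t, step) to F, and it is the unique such transducer morphism. -/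

import Mathlib

/-- Kleisli extension of `f : X → Option (M × Y)` to `Option (M × X)`. -/
def klExt {M X Y : Type} [Monoid M] (f : X → Option (M × Y)) :
    Option (M × X) → Option (M × Y) :=
  fun c => c.bind fun p => (f p.2).map fun q => (p.1 * q.1, q.2)

/-- Run a transducer's transition function along a word, from configuration `c`. -/
def runWord {M A S : Type} [Monoid M] (step : A → S → Option (M × S))
    (c : Option (M × S)) (w : List A) : Option (M × S) :=
  w.foldl (fun c a => klExt (step a) c) c

/-- Kleisli extension of the termination function `t : S → Option M`
(identifying `Option M` with `Option (M × PUnit)`). -/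
def outExt {M S : Type} [Monoid M] (t : S → Option M) :
    Option (M × S) → Option M :=
  fun c => c.bind fun p => (t p.2).map (p.1 * ·)

/-- The transducer `(S, init, t, step)` recognizes the language `L`. -/
def Recognizes {M A S : Type} [Monoid M] (init : Option (M × S))
    (t : S → Option M) (step : A → S → Option (M × S))
    (L : List A → Option M) : Prop :=
  ∀ w : List A, L w = outExt t (runWord step init w)

/-- `f` is a transducer morphism from `(S₁, init₁, t₁, step₁)` to
`(S₂, init₂, t₂, step₂)`. -/
def IsTransducerHom {M A S₁ S₂ : Type} [Monoid M]
    (init₁ : Option (M × S₁)) (t₁ : S₁ → Option M)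
    (step₁ : A → S₁ → Option (M × S₁))
    (init₂ : Option (M × S₂)) (t₂ : S₂ → Option M)
    (step₂ : A → S₂ → Option (M × S₂))
    (f : S₁ → Option (M × S₂)) : Prop :=
  klExt f init₁ = init₂ ∧
  (∀ s : S₁, t₁ s = outExt t₂ (f s)) ∧
  (∀ (a : A) (s : S₁), klExt f (step₁ a s) = klExt (step₂ a) (f s))

/-- `Λ : ι → Option M` is nontrivial if it is defined somewhere. -/
def NontrivialFn {M ι : Type} (Λ : ι → Option M) : Prop :=
  Λ ≠ fun _ => none

/-- `υ • Λ`, multiplying each defined value of `Λ` by `υ` on the left. -/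
def smulFn {M ι : Type} [Monoid M] (υ : M) (Λ : ι → Option M) : ι → Option M :=
  fun i => (Λ i).map (υ * ·)

/-- The functions `lgcd` and `red` satisfy conditions (a) and (b),
with index set `ι`. -/
def SatisfiesLgcdRed (M ι : Type) [Monoid M] (lgcd : (ι → Option M) → M)
    (red : (ι → Option M) → (ι → Option M)) : Prop :=
  (∀ Λ, NontrivialFn Λ → NontrivialFn (red Λ)) ∧
  (∀ Λ, NontrivialFn Λ → Λ = smulFn (lgcd Λ) (red Λ)) ∧
  (∀ Γ Λ, NontrivialFn Γ → NontrivialFn Λ → ∀ υ ν : M,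
    smulFn υ (red Γ) = smulFn ν (red Λ) → υ = ν ∧ red Γ = red Λ)

/-- The set of irreducible partial functions: the image of `red` on
nontrivial functions. -/
def Irr {M ι : Type} (red : (ι → Option M) → (ι → Option M)) : Type :=
  {Λ : ι → Option M // ∃ Γ : ι → Option M, NontrivialFn Γ ∧ red Γ = Λ}

open Classical in
/-- Initialization value and initial state of the final transducer. -/
noncomputable def finalInit {M A : Type} [Monoid M]
    (lgcd : (List A → Option M) → M)
    (red : (List A → Option M) → (List A → Option M))
    (L : List A → Option M) : Option (M × Irr red) :=
  if h : NontrivialFn L then some (lgcd L, ⟨red L, L, h, rfl⟩) else none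

/-- Termination function of the final transducer. -/
def finalT {M A : Type} (red : (List A → Option M) → (List A → Option M)) :
    Irr red → Option M :=
  fun Λ => Λ.1 []

open Classical in
/-- Transition function of the final transducer. -/
noncomputable def finalStep {M A : Type} [Monoid M]
    (lgcd : (List A → Option M) → M)
    (red : (List A → Option M) → (List A → Option M))
    (a : A) (Λ : Irr red) : Option (M × Irr red) :=
  if h : NontrivialFn (fun w => Λ.1 (a :: w)) then
    some (lgcd (fun w => Λ.1 (a :: w)),
      ⟨red (fun w => Λ.1 (a :: w)), fun w => Λ.1 (a :: w), h, rfl⟩)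
  else none

open Classical in
/-- The canonical morphism into the final transducer, sending a state `s`
to the reduction of the language `L_s` it recognizes. -/
noncomputable def canonHom {M A S : Type} [Monoid M]
    (lgcd : (List A → Option M) → M)
    (red : (List A → Option M) → (List A → Option M))
    (t : S → Option M) (step : A → S → Option (M × S)) :
    S → Option (M × Irr red) :=
  fun s =>
    if h : NontrivialFn (fun w => outExt t (runWord step (some (1, s)) w)) then
      some (lgcd (fun w => outExt t (runWord step (some (1, s)) w)),
        ⟨red (fun w => outExt t (runWord step (some (1, s)) w)),
          fun w => outExt t (runWord step (some (1, s)) w), h, rfl⟩)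
    else none

section Aux
variable {M A S X Y : Type} [Monoid M]

lemma klExt_none (f : X → Option (M × Y)) : klExt f none = none := rfl

lemma klExt_some (f : X → Option (M × Y)) (υ : M) (s : X) :
    klExt f (some (υ, s)) = (f s).map (fun q => (υ * q.1, q.2)) := rfl

lemma klExt_one (f : X → Option (M × Y)) (s : X) :
    klExt f (some (1, s)) = f s := by
  cases h : f s <;> simp [klExt, h]

lemma klExt_map (f : X → Option (M × Y)) (υ : M) (c : Option (M × X)) :
    klExt f (c.map (fun p => (υ * p.1, p.2)))
      = (klExt f c).map (fun p => (υ * p.1, p.2)) := by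
  cases c with
  | none => rfl
  | some p => cases h : f p.2 <;> simp [klExt, h, mul_assoc]

lemma outExt_map (t : S → Option M) (υ : M) (c : Option (M × S)) :
    outExt t (c.map (fun p => (υ * p.1, p.2))) = (outExt t c).map (υ * ·) := by
  cases c with
  | none => rfl
  | some p => cases h : t p.2 <;> simp [outExt, h, mul_assoc]

lemma runWord_cons (step : A → S → Option (M × S)) (c : Option (M × S))
    (a : A) (w : List A) :
    runWord step c (a :: w) = runWord step (klExt (step a) c) w := rfl

lemma runWord_none (step : A → S → Option (M × S)) (w : List A) :
    runWord step none w = none := by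
  induction w with
  | nil => rfl
  | cons a w ih => rw [runWord_cons, klExt_none]; exact ih

lemma runWord_map (step : A → S → Option (M × S)) (υ : M) (c : Option (M × S))
    (w : List A) :
    runWord step (c.map (fun p => (υ * p.1, p.2))) w
      = (runWord step c w).map (fun p => (υ * p.1, p.2)) := by
  induction w generalizing c with
  | nil => rfl
  | cons a w ih => rw [runWord_cons, klExt_map, ih, runWord_cons]

lemma lang_smul (t : S → Option M) (step : A → S → Option (M × S)) (υ : M) (s : S) :
    (fun w => outExt t (runWord step (some (υ, s)) w))
      = smulFn υ (fun w => outExt t (runWord step (some (1, s)) w)) := by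
  funext w
  have h : (some (υ, s) : Option (M × S))
      = (some (1, s) : Option (M × S)).map (fun p => (υ * p.1, p.2)) := by simp
  rw [h, runWord_map, outExt_map]; rfl

lemma nontrivialFn_iff {ι : Type} (Λ : ι → Option M) :
    NontrivialFn Λ ↔ ∃ i, Λ i ≠ none := by
  unfold NontrivialFn
  rw [Function.ne_iff]

lemma nontrivial_smulFn_iff {ι : Type} (υ : M) (Λ : ι → Option M) :
    NontrivialFn (smulFn υ Λ) ↔ NontrivialFn Λ := by
  simp [nontrivialFn_iff, smulFn]

lemma smulFn_smulFn {ι : Type} (υ ν : M) (Λ : ι → Option M) :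
    smulFn υ (smulFn ν Λ) = smulFn (υ * ν) Λ := by
  funext i; cases h : Λ i <;> simp [smulFn, h, mul_assoc]

lemma smulFn_one {ι : Type} (Λ : ι → Option M) : smulFn (1 : M) Λ = Λ := by
  funext i; cases h : Λ i <;> simp [smulFn, h]

end Aux
set_option linter.unusedSectionVars false

lemma final_lang {M A : Type} [Monoid M]
    (lgcd : (List A → Option M) → M)
    (red : (List A → Option M) → (List A → Option M))
    (hlr : SatisfiesLgcdRed M (List A) lgcd red)
    (w : List A) :
    ∀ (υ : M) (Λ : Irr red),
      outExt (finalT red) (runWord (finalStep lgcd red) (some (υ, Λ)) w)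
        = (Λ.1 w).map (υ * ·) := by
  induction w with
  | nil => intro υ Λ; rfl
  | cons a w ih =>
    intro υ Λ
    rw [runWord_cons, klExt_some]
    by_cases h : NontrivialFn (fun w => Λ.1 (a :: w))
    · rw [finalStep, dif_pos h]
      simp only [Option.map_some]
      erw [ih]
      have ha := hlr.2.1 _ h
      have : Λ.1 (a :: w) = ((red fun w => Λ.1 (a :: w)) w).map
          ((lgcd fun w => Λ.1 (a :: w)) * ·) := by
        conv_lhs => rw [show Λ.1 (a :: w) = (fun w => Λ.1 (a :: w)) w from rfl, ha]
        rfl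
      rw [this]
      cases h2 : (red fun w => Λ.1 (a :: w)) w <;> simp [h2, mul_assoc]
    · rw [finalStep, dif_neg h]
      have h' : (fun w => Λ.1 (a :: w)) = fun _ => none := not_not.mp h
      rw [Option.map_none, runWord_none]
      have : Λ.1 (a :: w) = none := congrFun h' w
      rw [this]; rfl
/-- The language recognized from state `s` with unit output. -/
def LsFn {M A S : Type} [Monoid M] (t : S → Option M)
    (step : A → S → Option (M × S)) (s : S) : List A → Option M :=
  fun w => outExt t (runWord step (some (1, s)) w)

open Classical in
lemma canonHom_eq {M A S : Type} [Monoid M]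
    (lgcd : (List A → Option M) → M)
    (red : (List A → Option M) → (List A → Option M))
    (t : S → Option M) (step : A → S → Option (M × S)) (s : S) :
    canonHom lgcd red t step s =
      if h : NontrivialFn (LsFn t step s) then
        some (lgcd (LsFn t step s), ⟨red (LsFn t step s), LsFn t step s, h, rfl⟩)
      else none := rfl

lemma not_nontrivial_const {M ι : Type} : ¬ NontrivialFn (fun _ : ι => (none : Option M)) :=
  fun h => h rfl

lemma eq_const_of_not_nontrivial {M ι : Type} {Λ : ι → Option M}
    (h : ¬ NontrivialFn Λ) : Λ = fun _ => none := not_not.mp h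

/-- Lemma A: the canonical morphism matches `finalInit` on any configuration. -/
lemma canon_klExt {M A S : Type} [Monoid M]
    (lgcd : (List A → Option M) → M)
    (red : (List A → Option M) → (List A → Option M))
    (hlr : SatisfiesLgcdRed M (List A) lgcd red)
    (t : S → Option M) (step : A → S → Option (M × S))
    (c : Option (M × S)) :
    klExt (canonHom lgcd red t step) c
      = finalInit lgcd red (fun w => outExt t (runWord step c w)) := by
  obtain ⟨hred, ha, hb⟩ := hlr
  cases c with
  | none =>
    rw [klExt_none, finalInit, dif_neg]
    intro h
    exact h (funext fun w => by rw [runWord_none]; rfl)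
  | some p =>
    obtain ⟨υ, s⟩ := p
    have hL : (fun w => outExt t (runWord step (some (υ, s)) w))
        = smulFn υ (LsFn t step s) := lang_smul t step υ s
    rw [klExt_some, canonHom_eq, finalInit]
    by_cases h : NontrivialFn (LsFn t step s)
    · rw [dif_pos h]
      have hnt : NontrivialFn (fun w => outExt t (runWord step (some (υ, s)) w)) := by
        rw [hL, nontrivial_smulFn_iff]; exact h
      rw [dif_pos hnt, Option.map_some]
      have key : smulFn (lgcd (fun w => outExt t (runWord step (some (υ, s)) w)))
            (red (fun w => outExt t (runWord step (some (υ, s)) w)))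
          = smulFn (υ * lgcd (LsFn t step s)) (red (LsFn t step s)) := by
        rw [← smulFn_smulFn, ← ha _ h, ← hL, ← ha _ hnt]
      obtain ⟨he1, he2⟩ := hb _ _ hnt h _ _ key
      exact Option.some_inj.mpr (Prod.ext he1.symm (Subtype.ext he2.symm))
    · rw [dif_neg h, dif_neg, Option.map_none]
      rw [hL, eq_const_of_not_nontrivial h]
      intro hc
      exact not_nontrivial_const (by simpa [smulFn, nontrivial_smulFn_iff] using hc)

/-- Lemma B: `finalStep` after the canonical morphism computes the derivative. -/
lemma canon_step {M A S : Type} [Monoid M]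
    (lgcd : (List A → Option M) → M)
    (red : (List A → Option M) → (List A → Option M))
    (hlr : SatisfiesLgcdRed M (List A) lgcd red)
    (t : S → Option M) (step : A → S → Option (M × S)) (a : A) (s : S) :
    klExt (finalStep lgcd red a) (canonHom lgcd red t step s)
      = finalInit lgcd red (fun w => LsFn t step s (a :: w)) := by
  obtain ⟨hred, ha, hb⟩ := hlr
  rw [canonHom_eq]
  by_cases h : NontrivialFn (LsFn t step s)
  · rw [dif_pos h]; refine (klExt_some _ _ _).trans ?_
    set D : List A → Option M := fun w => red (LsFn t step s) (a :: w) with hD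
    set E : List A → Option M := fun w => LsFn t step s (a :: w) with hE
    have hED : E = smulFn (lgcd (LsFn t step s)) D := by
      funext w
      show LsFn t step s (a :: w) = _
      conv_lhs => rw [ha _ h]
      rfl
    erw [finalStep]
    by_cases h2 : NontrivialFn D
    · rw [dif_pos h2, Option.map_some]
      have hEnt : NontrivialFn E := by rw [hED, nontrivial_smulFn_iff]; exact h2
      rw [finalInit, dif_pos hEnt]
      have key : smulFn (lgcd E) (red E)
          = smulFn (lgcd (LsFn t step s) * lgcd D) (red D) := by
        rw [← smulFn_smulFn, ← ha _ h2, ← hED, ← ha _ hEnt]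
      obtain ⟨he1, he2⟩ := hb _ _ hEnt h2 _ _ key
      exact Option.some_inj.mpr (Prod.ext he1.symm (Subtype.ext he2.symm))
    · rw [dif_neg h2, Option.map_none, finalInit, dif_neg]
      rw [hED, eq_const_of_not_nontrivial h2]
      intro hc
      exact not_nontrivial_const (by simpa [smulFn, nontrivial_smulFn_iff] using hc)
  · rw [dif_neg h, klExt_none, finalInit, dif_neg]
    have := eq_const_of_not_nontrivial h
    intro hc
    exact hc (funext fun w => congrFun this (a :: w))

/-- Lemma C: any morphism into the final transducer preserves languages. -/
lemma hom_lang {M A S : Type} [Monoid M]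
    (lgcd : (List A → Option M) → M)
    (red : (List A → Option M) → (List A → Option M))
    (t : S → Option M) (step : A → S → Option (M × S))
    (g : S → Option (M × Irr red))
    (hg2 : ∀ s : S, t s = outExt (finalT red) (g s))
    (hg3 : ∀ (a : A) (s : S), klExt g (step a s) = klExt (finalStep lgcd red a) (g s))
    (w : List A) :
    ∀ c : Option (M × S),
      outExt t (runWord step c w)
        = outExt (finalT red) (runWord (finalStep lgcd red) (klExt g c) w) := by
  induction w with
  | nil =>
    intro c
    cases c with
    | none => rfl
    | some p =>
      obtain ⟨υ, s⟩ := p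
      show outExt t (some (υ, s)) = outExt (finalT red) (klExt g (some (υ, s)))
      rw [klExt_some, outExt_map, ← hg2 s]
      rfl
  | cons a w ih =>
    intro c
    rw [runWord_cons, runWord_cons, ih]
    congr 2
    cases c with
    | none => rfl
    | some p =>
      obtain ⟨υ, s⟩ := p
      rw [klExt_some, klExt_map, hg3, klExt_some, klExt_map]
theorem final_transducer (M A S : Type) [Monoid M] [Countable A]
    (lgcd : (List A → Option M) → M)
    (red : (List A → Option M) → (List A → Option M))
    (hlr : SatisfiesLgcdRed M (List A) lgcd red)
    (init : Option (M × S)) (t : S → Option M)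
    (step : A → S → Option (M × S)) :
    IsTransducerHom init t step
      (finalInit lgcd red (fun w => outExt t (runWord step init w)))
      (finalT red) (finalStep lgcd red)
      (canonHom lgcd red t step) ∧
    (∀ g : S → Option (M × Irr red),
      IsTransducerHom init t step
        (finalInit lgcd red (fun w => outExt t (runWord step init w)))
        (finalT red) (finalStep lgcd red) g →
      g = canonHom lgcd red t step) := by
  constructor
  · refine ⟨canon_klExt lgcd red hlr t step init, ?_, ?_⟩
    · intro s
      have h0 : LsFn t step s [] = t s := by
        show outExt t (some (1, s)) = t s
        cases ht : t s <;> simp [outExt, ht]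
      rw [canonHom_eq]
      by_cases h : NontrivialFn (LsFn t step s)
      · rw [dif_pos h]
        have : t s = smulFn (lgcd (LsFn t step s)) (red (LsFn t step s)) [] := by
          rw [← hlr.2.1 _ h]; exact h0.symm
        rw [this]; rfl
      · rw [dif_neg h]
        have hc := eq_const_of_not_nontrivial h
        rw [← h0, congrFun hc []]; rfl
    · intro a s
      rw [canon_klExt lgcd red hlr t step (step a s), canon_step lgcd red hlr t step a s]
      congr 1
      funext w
      show outExt t (runWord step (step a s) w)
        = outExt t (runWord step (some (1, s)) (a :: w))
      rw [runWord_cons, klExt_one]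
  · intro g hg
    obtain ⟨hg1, hg2, hg3⟩ := hg
    funext s
    have hlang : ∀ w, LsFn t step s w
        = outExt (finalT red) (runWord (finalStep lgcd red) (g s) w) := by
      intro w
      have h := hom_lang lgcd red t step g hg2 hg3 w (some (1, s))
      rwa [klExt_one] at h
    rw [canonHom_eq]
    cases hgs : g s with
    | none =>
      rw [dif_neg]
      intro h
      apply h
      funext w
      rw [hlang w, hgs, runWord_none]
      rfl
    | some p =>
      obtain ⟨υ, Λ⟩ := p
      obtain ⟨Γ, hΓ, hΓred⟩ := Λ.2
      have hLs : LsFn t step s = smulFn υ Λ.1 := by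
        funext w; rw [hlang w, hgs, final_lang lgcd red hlr w υ Λ]; rfl
      have hΛnt : NontrivialFn Λ.1 := hΓred ▸ hlr.1 Γ hΓ
      have hnt : NontrivialFn (LsFn t step s) := by
        rw [hLs, nontrivial_smulFn_iff]; exact hΛnt
      rw [dif_pos hnt]
      have key : smulFn υ (red Γ) = smulFn (lgcd (LsFn t step s)) (red (LsFn t step s)) := by
        rw [hΓred, ← hLs, ← hlr.2.1 _ hnt]
      obtain ⟨he1, he2⟩ := hlr.2.2 Γ (LsFn t step s) hΓ hnt υ (lgcd (LsFn t step s)) key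
      exact Option.some_inj.mpr (Prod.ext he1 (Subtype.ext (hΓred ▸ he2)))
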